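/- Let M ∈ ⋀X and suppose M = B₁ + ⋯ + B_m where each B_i is a blade, and this decomposition is minimal, i.e. M cannot be written as a sum of fewer than m blades. Then the decomposition is balanced: isp M = ⋂_{i=1}^m isp B_i and osp M = osp B₁ + ⋯ + osp B_m. -/

import Mathlib

open scoped RealInnerProductSpace

set_option linter.unusedSectionVars false
set_option maxHeartbeats 1000000

/-- The blade `v₁ ∧ ⋯ ∧ v_k` in the exterior algebra. -/
noncomputable def expBlade {X : Type*} [AddCommGroup X] [Module ℝ X] {k : ℕ}
    (v : Fin k → X) : ExteriorAlgebra ℝ X :=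
  (List.ofFn fun i => ExteriorAlgebra.ι ℝ (v i)).prod

/-- A blade: a scalar, or an exterior product of vectors. -/
def IsBlade {X : Type*} [AddCommGroup X] [Module ℝ X] (B : ExteriorAlgebra ℝ X) : Prop :=
  (∃ r : ℝ, B = algebraMap ℝ (ExteriorAlgebra ℝ X) r) ∨
    ∃ (k : ℕ) (v : Fin k → X), B = (List.ofFn fun i => ExteriorAlgebra.ι ℝ (v i)).prod

/-- The inner space of a multivector `M`: the subspace `{v ∈ X : v ∧ M = 0}`. -/
noncomputable def innerSpace {X : Type*} [AddCommGroup X] [Module ℝ X]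
    (M : ExteriorAlgebra ℝ X) : Submodule ℝ X :=
  LinearMap.ker ((LinearMap.mulRight ℝ M).comp (ExteriorAlgebra.ι ℝ))

/-- The outer space of a multivector `M`: the intersection of all subspaces `V ⊆ X` such
that `M` lies in the subalgebra of the exterior algebra generated by `V`. -/
noncomputable def outerSpace {X : Type*} [AddCommGroup X] [Module ℝ X]
    (M : ExteriorAlgebra ℝ X) : Submodule ℝ X :=
  sInf {V : Submodule ℝ X |
    M ∈ Algebra.adjoin ℝ (⇑(ExteriorAlgebra.ι ℝ (M := X)) '' (V : Set X))}

section Aux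

variable {X : Type*} [NormedAddCommGroup X] [InnerProductSpace ℝ X] [FiniteDimensional ℝ X]

local notation "ιX" => ExteriorAlgebra.ι (M := X) ℝ

/-- The blade given by a list of vectors. -/
noncomputable def bl (L : List X) : ExteriorAlgebra ℝ X := (L.map ιX).prod

lemma bl_nil : bl ([] : List X) = 1 := rfl

lemma bl_cons (x : X) (L : List X) : bl (x :: L) = ιX x * bl L := by
  simp [bl]

lemma ofFn_blade {k : ℕ} (v : Fin k → X) :
    (List.ofFn fun i => ExteriorAlgebra.ι ℝ (v i)).prod = bl (List.ofFn v) := by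
  rw [bl, List.map_ofFn]; rfl

lemma isBlade_bl (L : List X) : IsBlade (bl L) := by
  refine Or.inr ⟨L.length, L.get, ?_⟩
  rw [ofFn_blade, List.ofFn_get]

lemma isBlade_zero : IsBlade (0 : ExteriorAlgebra ℝ X) := Or.inl ⟨0, by simp⟩

lemma map_bl (g : X →ₗ[ℝ] X) (L : List X) :
    ExteriorAlgebra.map g (bl L) = bl (L.map g) := by
  rw [bl, bl, map_list_prod, List.map_map, List.map_map]
  congr 1
  exact List.map_congr_left fun x _ => ExteriorAlgebra.map_apply_ι g x

lemma isBlade_map (g : X →ₗ[ℝ] X) {B : ExteriorAlgebra ℝ X} (hB : IsBlade B) :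
    IsBlade (ExteriorAlgebra.map g B) := by
  rcases hB with ⟨r, rfl⟩ | ⟨k, f, rfl⟩
  · exact Or.inl ⟨r, AlgHom.commutes _ r⟩
  · rw [ofFn_blade, map_bl]; exact isBlade_bl _

lemma ι_swap (x y : X) :
    (ιX x : ExteriorAlgebra ℝ X) * ιX y = ιX (-y) * ιX x := by
  have h := ExteriorAlgebra.ι_add_mul_swap (R := ℝ) x y
  rw [map_neg, neg_mul]
  exact eq_neg_of_add_eq_zero_left h
  

lemma mem_mul_bl {x : X} {L : List X} (h : x ∈ L) : ιX x * bl L = 0 := by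
  induction L with
  | nil => exact absurd h List.not_mem_nil
  | cons a L ih =>
    rw [bl_cons, ← mul_assoc]
    rcases List.mem_cons.mp h with rfl | h'
    · rw [ExteriorAlgebra.ι_sq_zero, zero_mul]
    · rw [ι_swap, mul_assoc, ih h', mul_zero]

lemma span_mul_bl {L : List X} {v : X} (h : v ∈ Submodule.span ℝ {x | x ∈ L}) :
    ιX v * bl L = 0 := by
  have hle : Submodule.span ℝ {x | x ∈ L} ≤
      LinearMap.ker ((LinearMap.mulRight ℝ (bl L)).comp (ExteriorAlgebra.ι ℝ)) := by
    rw [Submodule.span_le]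
    intro x hx
    simp only [SetLike.mem_coe, LinearMap.mem_ker, LinearMap.comp_apply,
      LinearMap.mulRight_apply]
    exact mem_mul_bl hx
  simpa using hle h

lemma adjoin_fix (g : X →ₗ[ℝ] X) {V : Submodule ℝ X} (hg : ∀ x ∈ V, g x = x)
    {a : ExteriorAlgebra ℝ X}
    (ha : a ∈ Algebra.adjoin ℝ (⇑(ExteriorAlgebra.ι ℝ (M := X)) '' (V : Set X))) :
    ExteriorAlgebra.map g a = a := by
  induction ha using Algebra.adjoin_induction with
  | mem x hx =>
    obtain ⟨y, hy, rfl⟩ := hx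
    rw [ExteriorAlgebra.map_apply_ι, hg y hy]
  | algebraMap r => exact AlgHom.commutes _ r
  | add x y hx hy ihx ihy => rw [map_add, ihx, ihy]
  | mul x y hx hy ihx ihy => rw [map_mul, ihx, ihy]

lemma bl_mem_adjoin {V : Submodule ℝ X} {L : List X} (h : ∀ x ∈ L, x ∈ V) :
    bl L ∈ Algebra.adjoin ℝ (⇑(ExteriorAlgebra.ι ℝ (M := X)) '' (V : Set X)) := by
  apply Subalgebra.list_prod_mem
  intro b hb
  obtain ⟨x, hx, rfl⟩ := List.mem_map.mp hb
  exact Algebra.subset_adjoin ⟨x, h x hx, rfl⟩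

lemma exists_dual {V : Submodule ℝ X} {y : X} (hy : y ∉ V) :
    ∃ φ : X →ₗ[ℝ] ℝ, (∀ x ∈ V, φ x = 0) ∧ φ y = 1 := by
  obtain ⟨p, hp, w, hw, hyw⟩ := V.exists_add_mem_mem_orthogonal y
  have hw0 : w ≠ 0 := by
    rintro rfl
    rw [add_zero] at hyw
    exact hy (hyw ▸ hp)
  have hwV : ∀ x ∈ V, (inner ℝ w x : ℝ) = 0 := fun x hx => by
    rw [real_inner_comm]; exact hw x hx
  have hwy : (inner ℝ w y : ℝ) = (inner ℝ w w : ℝ) := by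
    rw [hyw, inner_add_right, hwV p hp, zero_add]
  have hww : (inner ℝ w w : ℝ) ≠ 0 := fun h => hw0 (inner_self_eq_zero.mp h)
  refine ⟨(((inner ℝ w w : ℝ))⁻¹) • ((innerSL ℝ w).toLinearMap), fun x hx => ?_, ?_⟩
  · simp [hwV x hx]
  · simp only [LinearMap.smul_apply, ContinuousLinearMap.coe_coe, innerSL_apply_apply,
      smul_eq_mul, hwy]
    exact inv_mul_cancel₀ hww

lemma eq_iota_mul {v : X} {M : ExteriorAlgebra ℝ X} (φ : X →ₗ[ℝ] ℝ) (hφ : φ v = 1)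
    (h : ExteriorAlgebra.ι ℝ v * M = 0) :
    ∃ N, M = ExteriorAlgebra.ι ℝ v * N := by
  have hc := CliffordAlgebra.contractLeft_ι_mul (Q := (0 : QuadraticForm ℝ X)) (d := φ) v M
  refine ⟨CliffordAlgebra.contractLeft φ M, ?_⟩
  rw [show CliffordAlgebra.ι (0 : QuadraticForm ℝ X) v = ExteriorAlgebra.ι ℝ v from rfl]
    at hc
  rw [h, map_zero, hφ, one_smul] at hc
  exact sub_eq_zero.mp hc.symm

lemma blade_split (φ : X →ₗ[ℝ] ℝ) (v : X) (L : List X) (hL : L ≠ []) :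
    ∃ (c : ℝ) (w : X) (W : List X),
      bl L = ιX (c • v + w) * bl W ∧
      bl (L.map ((LinearMap.id : X →ₗ[ℝ] X) - φ.smulRight v)) = ιX w * bl W := by
  set q : X →ₗ[ℝ] X := (LinearMap.id : X →ₗ[ℝ] X) - φ.smulRight v with hq
  have hqx : ∀ x : X, q x = x - φ x • v := fun x => by
    simp [hq, LinearMap.smulRight_apply]
  have hdecomp : ∀ x : X, φ x • v + q x = x := fun x => by
    rw [hqx]; abel
  induction L with
  | nil => exact absurd rfl hL
  | cons b L ih =>
    rcases eq_or_ne L [] with rfl | hL'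
    · refine ⟨φ b, q b, [], ?_, ?_⟩
      · simp only [bl_cons, bl_nil, mul_one, hdecomp b]
      · simp only [List.map_cons, List.map_nil, bl_cons, bl_nil, mul_one]
    · obtain ⟨c', w', W', h1, h2⟩ := ih hL'
      rcases eq_or_ne (φ b) 0 with hb0 | hb0
      · have hqb : q b = b := by rw [hqx, hb0, zero_smul, sub_zero]
        refine ⟨-c', -w', q b :: W', ?_, ?_⟩
        · rw [bl_cons, h1, bl_cons, hqb, neg_smul, ← neg_add]
          simp only [← mul_assoc]
          rw [← ι_swap]
        · rw [List.map_cons, bl_cons, h2, bl_cons]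
          simp only [← mul_assoc]
          rw [← ι_swap]
      · set t : ℝ := c' / φ b with ht
        have hc' : c' = t * φ b := by rw [ht, div_mul_cancel₀ c' hb0]
        refine ⟨φ b, q b, (w' - t • (q b)) :: W', ?_, ?_⟩
        · have hb : c' • v + t • (q b) = t • b := by
            rw [hc', mul_smul, ← smul_add, hdecomp b]
          have key1 : ιX (w' - t • (q b)) + t • ιX b = ιX (c' • v + w') := by
            have hvec : (w' - t • (q b)) + t • b = c' • v + w' := by rw [← hb]; abel
            rw [← hvec, map_add, map_smul]
          rw [bl_cons, h1, bl_cons, hdecomp b, ← key1]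
          simp only [← mul_assoc, add_mul, mul_add, mul_smul_comm, smul_mul_assoc,
            ExteriorAlgebra.ι_sq_zero, zero_mul, smul_zero, add_zero, mul_zero]
        · have key2 : ιX (w' - t • (q b)) + t • ιX (q b) = ιX w' := by
            have hvec : (w' - t • (q b)) + t • (q b) = w' := by abel
            conv_rhs => rw [← hvec]
            rw [map_add, map_smul]
          rw [List.map_cons, bl_cons, h2, bl_cons, ← key2]
          simp only [← mul_assoc, add_mul, mul_add, mul_smul_comm, smul_mul_assoc,
            ExteriorAlgebra.ι_sq_zero, zero_mul, smul_zero, add_zero, mul_zero]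

lemma mem_innerSpace {M : ExteriorAlgebra ℝ X} {v : X} :
    v ∈ innerSpace M ↔ ExteriorAlgebra.ι ℝ v * M = 0 := by
  simp [innerSpace, LinearMap.mem_ker, LinearMap.mulRight_apply]

lemma diff_isBlade (φ : X →ₗ[ℝ] ℝ) (v : X) {B : ExteriorAlgebra ℝ X} (hB : IsBlade B) :
    IsBlade (B - ExteriorAlgebra.map ((LinearMap.id : X →ₗ[ℝ] X) - φ.smulRight v) B) := by
  set q : X →ₗ[ℝ] X := (LinearMap.id : X →ₗ[ℝ] X) - φ.smulRight v with hq
  rcases hB with ⟨r, rfl⟩ | ⟨k, f, rfl⟩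
  · rw [AlgHom.commutes, sub_self]; exact isBlade_zero
  · rw [ofFn_blade]
    rcases eq_or_ne (List.ofFn f) [] with h | h
    · rw [h, bl_nil, map_one, sub_self]; exact isBlade_zero
    · obtain ⟨c, w, W, h1, h2⟩ := blade_split φ v _ h
      rw [map_bl, h1, h2, ← sub_mul, ← map_sub]
      have : c • v + w - w = c • v := by abel
      rw [this, ← bl_cons]
      exact isBlade_bl _

lemma map_q_fix (g : X →ₗ[ℝ] X) {L : List X} (h : ∀ x ∈ L, g x = x) :
    ExteriorAlgebra.map g (bl L) = bl L := by
  rw [map_bl]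
  congr 1
  conv_rhs => rw [← List.map_id L]
  exact List.map_congr_left fun x hx => by rw [h x hx]; rfl

lemma shrink {m : ℕ} {M : ExteriorAlgebra ℝ X}
    (hmin : ∀ (k : ℕ) (C : Fin k → ExteriorAlgebra ℝ X),
      (∀ i, IsBlade (C i)) → M = ∑ i, C i → m ≤ k)
    (C : Fin m → ExteriorAlgebra ℝ X) (hC : ∀ k, IsBlade (C k)) (hM : M = ∑ k, C k)
    (i : Fin m) (hCi : C i = 0) : False := by
  have hpos : 0 < m := i.pos
  obtain ⟨m', rfl⟩ : ∃ m', m = m' + 1 := ⟨m - 1, by omega⟩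
  have hM' : M = ∑ k : Fin m', C (i.succAbove k) := by
    rw [hM, Fin.sum_univ_succAbove C i, hCi, zero_add]
  have := hmin m' _ (fun k => hC _) hM'
  omega

lemma bl_map_zero {g : X →ₗ[ℝ] X} {L : List X} {x : X} (hx : x ∈ L) (hgx : g x = 0) :
    bl (L.map g) = 0 := by
  apply List.prod_eq_zero
  refine List.mem_map.mpr ⟨g x, List.mem_map_of_mem (f := g) hx, ?_⟩
  rw [hgx, map_zero]

lemma vec_mem_outerSpace {L : List X} (h0 : bl L ≠ 0) {x : X} (hx : x ∈ L) :
    x ∈ outerSpace (bl L) := by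
  rw [outerSpace, Submodule.mem_sInf]
  intro V hV
  by_contra hxV
  obtain ⟨φ, hφ0, hφx⟩ := exists_dual hxV
  set q : X →ₗ[ℝ] X := (LinearMap.id : X →ₗ[ℝ] X) - φ.smulRight x with hq
  have hqfix : ∀ u ∈ V, q u = u := fun u hu => by
    simp [hq, LinearMap.smulRight_apply, hφ0 u hu]
  have hfix : ExteriorAlgebra.map q (bl L) = bl L := adjoin_fix q hqfix hV
  apply h0
  rw [← hfix, map_bl]
  exact bl_map_zero hx (by simp [hq, LinearMap.smulRight_apply, hφx])


end Aux

/-- every minimal blade decomposition is balanced. -/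
theorem stmt15 {X : Type*} [NormedAddCommGroup X] [InnerProductSpace ℝ X]
    [FiniteDimensional ℝ X]
    (M : ExteriorAlgebra ℝ X) {m : ℕ} (B : Fin m → ExteriorAlgebra ℝ X)
    (hblade : ∀ i, IsBlade (B i)) (hsum : M = ∑ i, B i)
    (hmin : ∀ (k : ℕ) (C : Fin k → ExteriorAlgebra ℝ X),
      (∀ i, IsBlade (C i)) → M = ∑ i, C i → m ≤ k) :
    innerSpace M = ⨅ i, innerSpace (B i) ∧
    outerSpace M = ⨆ i, outerSpace (B i) := by
  constructor
  · -- inner space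
    apply le_antisymm
    · intro v hv
      rw [Submodule.mem_iInf]
      intro i
      rw [mem_innerSpace]
      by_contra hvB
      have hvM : ExteriorAlgebra.ι ℝ v * M = 0 := mem_innerSpace.mp hv
      -- find φ with φ v = 1 fixing B i
      obtain ⟨φ, hφv, hfix⟩ : ∃ φ : X →ₗ[ℝ] ℝ, φ v = 1 ∧
          ExteriorAlgebra.map ((LinearMap.id : X →ₗ[ℝ] X) - φ.smulRight v) (B i) = B i := by
        rcases hblade i with ⟨r, hr⟩ | ⟨k, f, hf⟩
        · have hv0 : v ∉ (⊥ : Submodule ℝ X) := by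
            intro h
            rw [Submodule.mem_bot] at h
            exact hvB (by rw [h, map_zero, zero_mul])
          obtain ⟨φ, _, hφ⟩ := exists_dual hv0
          exact ⟨φ, hφ, by rw [hr, AlgHom.commutes]⟩
        · have hfb : B i = bl (List.ofFn f) := by rw [hf, ofFn_blade]
          have hvL : v ∉ Submodule.span ℝ {x | x ∈ List.ofFn f} := by
            intro h
            exact hvB (by rw [hfb]; exact span_mul_bl h)
          obtain ⟨φ, hφ0, hφv⟩ := exists_dual hvL
          refine ⟨φ, hφv, ?_⟩
          rw [hfb]
          apply map_q_fix
          intro x hx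
          simp [LinearMap.smulRight_apply, hφ0 x (Submodule.subset_span hx)]
      set q : X →ₗ[ℝ] X := (LinearMap.id : X →ₗ[ℝ] X) - φ.smulRight v with hq
      obtain ⟨N, hN⟩ := eq_iota_mul φ hφv hvM
      have hqv : q v = 0 := by
        simp [hq, LinearMap.smulRight_apply, hφv]
      have hqM : ExteriorAlgebra.map q M = 0 := by
        rw [hN, map_mul, ExteriorAlgebra.map_apply_ι, hqv, map_zero, zero_mul]
      set C : Fin m → ExteriorAlgebra ℝ X := fun k => B k - ExteriorAlgebra.map q (B k)
        with hC
      refine shrink hmin C (fun k => diff_isBlade φ v (hblade k)) ?_ i ?_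
      · calc M = M - ExteriorAlgebra.map q M := by rw [hqM, sub_zero]
        _ = ∑ k, C k := by
            rw [hsum, map_sum, ← Finset.sum_sub_distrib]
      · rw [hC]
        simp only [hfix, sub_self]
    · intro v hv
      rw [Submodule.mem_iInf] at hv
      rw [mem_innerSpace, hsum, Finset.mul_sum]
      apply Finset.sum_eq_zero
      intro i _
      exact mem_innerSpace.mp (hv i)
  · -- outer space
    apply le_antisymm
    · apply sInf_le
      show M ∈ Algebra.adjoin ℝ _
      rw [hsum]
      apply Subalgebra.sum_mem
      intro i _
      rcases hblade i with ⟨r, hr⟩ | ⟨k, f, hf⟩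
      · rw [hr]; exact Subalgebra.algebraMap_mem _ r
      · have hfb : B i = bl (List.ofFn f) := by rw [hf, ofFn_blade]
        rw [hfb]
        rcases eq_or_ne (bl (List.ofFn f)) 0 with h0 | h0
        · rw [h0]; exact Subalgebra.zero_mem _
        · apply bl_mem_adjoin
          intro x hx
          have hxo : x ∈ outerSpace (B i) := by
            rw [hfb]; exact vec_mem_outerSpace h0 hx
          exact (le_iSup (fun j => outerSpace (B j)) i) hxo
    · apply iSup_le
      intro i
      unfold outerSpace
      apply le_sInf
      intro V hV
      have hV' : M ∈ Algebra.adjoin ℝ (⇑(ExteriorAlgebra.ι ℝ (M := X)) '' (V : Set X)) := hV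
      have hBiV : B i ∈ Algebra.adjoin ℝ (⇑(ExteriorAlgebra.ι ℝ (M := X)) '' (V : Set X)) := by
        by_contra hni
        rcases hblade i with ⟨r, hr⟩ | ⟨k, f, hf⟩
        · exact hni (hr ▸ Subalgebra.algebraMap_mem _ r)
        · have hfb : B i = bl (List.ofFn f) := by rw [hf, ofFn_blade]
          rw [hfb] at hni
          obtain ⟨x, hxL, hxV⟩ : ∃ x ∈ List.ofFn f, x ∉ V := by
            by_contra hall
            push_neg at hall
            exact hni (bl_mem_adjoin hall)
          obtain ⟨φ, hφ0, hφx⟩ := exists_dual hxV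
          set q : X →ₗ[ℝ] X := (LinearMap.id : X →ₗ[ℝ] X) - φ.smulRight x with hq
          have hqfix : ∀ u ∈ V, q u = u := fun u hu => by
            simp [hq, LinearMap.smulRight_apply, hφ0 u hu]
          have hqM : ExteriorAlgebra.map q M = M := adjoin_fix q hqfix hV'
          set C : Fin m → ExteriorAlgebra ℝ X := fun j => ExteriorAlgebra.map q (B j)
            with hC
          refine shrink hmin C (fun j => isBlade_map q (hblade j)) ?_ i ?_
          · calc M = ExteriorAlgebra.map q M := hqM.symm
            _ = ∑ j, C j := by rw [hsum, map_sum]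
          · rw [hC]
            simp only
            rw [hfb, map_bl]
            exact bl_map_zero hxL (by simp [hq, LinearMap.smulRight_apply, hφx])
      exact sInf_le hBiV
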